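/- arXiv:1909.09401 — 9 statements merged into one kernel-verified Lean document; each statement's English description precedes it below -/
import Mathlib

section
/- For all ceers S, T and every k ≥ 0: S ≡ T if and only if S ⊕ Id_k ≡ T ⊕ Id_k, where Id_k is the equivalence relation with exactly k classes (and S ⊕ Id_0 = S). -/
/-- Computable reducibility of binary relations on ℕ. -/
def CompReduces (R S : ℕ → ℕ → Prop) : Prop :=
  ∃ f : ℕ → ℕ, Computable f ∧ ∀ x y, (R x y ↔ S (f x) (f y))

/-- Bi-reducibility. -/
def CompEquiv (R S : ℕ → ℕ → Prop) : Prop :=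
  CompReduces R S ∧ CompReduces S R

/-- Uniform join: evens code `R`, odds code `S`. -/
def UJoin (R S : ℕ → ℕ → Prop) : ℕ → ℕ → Prop := fun x y =>
  (∃ u v, x = 2 * u ∧ y = 2 * v ∧ R u v) ∨
  (∃ u v, x = 2 * u + 1 ∧ y = 2 * v + 1 ∧ S u v)

/-- Congruence modulo `n` (for `n ≥ 1` this has exactly `n` classes). -/
def IdN (n : ℕ) : ℕ → ℕ → Prop := fun x y => x % n = y % n

/-- `R ⊕ Id_k`, with the convention `R ⊕ Id_0 = R`. -/
def OplusId (R : ℕ → ℕ → Prop) (k : ℕ) : ℕ → ℕ → Prop :=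
  if k = 0 then R else UJoin R (IdN k)

/-- A ceer: a computably enumerable equivalence relation on ℕ. -/
def IsCeer (R : ℕ → ℕ → Prop) : Prop :=
  Equivalence R ∧ REPred (fun p : ℕ × ℕ => R p.1 p.2)

/-- `R` has infinitely many equivalence classes. -/
def InfiniteClasses (R : ℕ → ℕ → Prop) : Prop :=
  ∀ A : Finset ℕ, ∃ x, ∀ a ∈ A, ¬ R x a

/-- `R` has exactly `n` equivalence classes. -/
def ExactlyNClasses (R : ℕ → ℕ → Prop) (n : ℕ) : Prop :=
  ∃ f : Fin n → ℕ, (∀ i j, i ≠ j → ¬ R (f i) (f j)) ∧ ∀ x, ∃ i, R x (f i)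

/-- `R` has an infinite c.e. transversal. -/
def HasInfiniteTransversal (R : ℕ → ℕ → Prop) : Prop :=
  ∃ W : Set ℕ, REPred (· ∈ W) ∧ W.Infinite ∧
    ∀ x ∈ W, ∀ y ∈ W, x ≠ y → ¬ R x y

/-- A dark ceer: infinitely many classes, no infinite c.e. transversal. -/
def IsDark (R : ℕ → ℕ → Prop) : Prop :=
  IsCeer R ∧ InfiniteClasses R ∧ ¬ HasInfiniteTransversal R

/-- `R ≤_I S`: `R ≤ S ⊕ Id_k` for some `k`. -/
def ReducesI (R S : ℕ → ℕ → Prop) : Prop :=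
  ∃ k, CompReduces R (OplusId S k)

/-- The c.e. set `W` intersects infinitely many `R`-classes. -/
def MeetsInfManyClasses (R : ℕ → ℕ → Prop) (W : Set ℕ) : Prop :=
  ∀ A : Finset ℕ, ∃ x ∈ W, ∀ a ∈ A, ¬ R x a

lemma ujoin_ee (R I : ℕ → ℕ → Prop) (u v : ℕ) : UJoin R I (2*u) (2*v) ↔ R u v := by
  constructor
  · rintro (⟨a,b,ha,hb,hr⟩|⟨a,b,ha,hb,hr⟩)
    · obtain rfl : a = u := by omega
      obtain rfl : b = v := by omega
      exact hr
    · omega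
  · intro h; exact Or.inl ⟨u, v, rfl, rfl, h⟩

lemma ujoin_oo (R I : ℕ → ℕ → Prop) (u v : ℕ) : UJoin R I (2*u+1) (2*v+1) ↔ I u v := by
  constructor
  · rintro (⟨a,b,ha,hb,hr⟩|⟨a,b,ha,hb,hr⟩)
    · omega
    · obtain rfl : a = u := by omega
      obtain rfl : b = v := by omega
      exact hr
  · intro h; exact Or.inr ⟨u, v, rfl, rfl, h⟩

lemma ujoin_eo (R I : ℕ → ℕ → Prop) (u v : ℕ) : ¬ UJoin R I (2*u) (2*v+1) := by
  rintro (⟨a,b,ha,hb,hr⟩|⟨a,b,ha,hb,hr⟩) <;> omega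

lemma ujoin_oe (R I : ℕ → ℕ → Prop) (u v : ℕ) : ¬ UJoin R I (2*u+1) (2*v) := by
  rintro (⟨a,b,ha,hb,hr⟩|⟨a,b,ha,hb,hr⟩) <;> omega

lemma getD_computable (L : List ℕ) : Computable (fun n => L.getD n 0) :=
  ((Primrec.list_getD (0 : ℕ)).comp (Primrec.const L) Primrec.id).to_comp

lemma join_mono (S T : ℕ → ℕ → Prop) (k : ℕ) (h : CompReduces S T) :
    CompReduces (UJoin S (IdN k)) (UJoin T (IdN k)) := by
  obtain ⟨f, hfc, hf⟩ := h
  refine ⟨fun x => (1 - x % 2) * (2 * f (x / 2)) + (x % 2) * x, ?_, ?_⟩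
  · have p1 : Primrec (fun x : ℕ => (1 - x % 2, x % 2 * x)) :=
      .pair (Primrec.nat_sub.comp (.const 1) (Primrec.nat_mod.comp .id (.const 2)))
        (Primrec.nat_mul.comp (Primrec.nat_mod.comp .id (.const 2)) .id)
    have p2 : Computable (fun x : ℕ => 2 * f (x / 2)) :=
      (Primrec.nat_mul.comp (.const 2) .id).to_comp.comp
        (hfc.comp (Primrec.nat_div.comp .id (.const 2)).to_comp)
    have := (Primrec.nat_add.comp
        (Primrec.nat_mul.comp (Primrec.fst.comp .snd) .fst)
        (Primrec.snd.comp .snd)).to_comp.comp (Computable.pair p2 p1.to_comp)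
    exact this.of_eq (fun x => by simp)
  · intro x y
    beta_reduce
    rcases Nat.even_or_odd x with ⟨u, hu⟩ | ⟨u, hu⟩ <;>
      rcases Nat.even_or_odd y with ⟨v, hv⟩ | ⟨v, hv⟩ <;>
      subst hu <;> subst hv
    · rw [show u + u = 2 * u by ring, show v + v = 2 * v by ring]
      have e1 : (1 - (2*u) % 2) * (2 * f ((2*u) / 2)) + ((2*u) % 2) * (2*u) = 2 * f u := by
        simp [Nat.mul_div_cancel_left, Nat.mul_mod_right]
      have e2 : (1 - (2*v) % 2) * (2 * f ((2*v) / 2)) + ((2*v) % 2) * (2*v) = 2 * f v := by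
        simp [Nat.mul_div_cancel_left, Nat.mul_mod_right]
      rw [e1, e2, ujoin_ee, ujoin_ee]
      exact hf u v
    · rw [show u + u = 2 * u by ring]
      have e1 : (1 - (2*u) % 2) * (2 * f ((2*u) / 2)) + ((2*u) % 2) * (2*u) = 2 * f u := by
        simp [Nat.mul_div_cancel_left, Nat.mul_mod_right]
      have h2 : (2*v+1) % 2 = 1 := by omega
      have e2 : (1 - (2*v+1) % 2) * (2 * f ((2*v+1) / 2)) + ((2*v+1) % 2) * (2*v+1) = 2*v+1 := by
        rw [h2]; simp
      rw [e1, e2]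
      exact iff_of_false (ujoin_eo _ _ _ _) (ujoin_eo _ _ _ _)
    · rw [show v + v = 2 * v by ring]
      have h2 : (2*u+1) % 2 = 1 := by omega
      have e1 : (1 - (2*u+1) % 2) * (2 * f ((2*u+1) / 2)) + ((2*u+1) % 2) * (2*u+1) = 2*u+1 := by
        rw [h2]; simp
      have e2 : (1 - (2*v) % 2) * (2 * f ((2*v) / 2)) + ((2*v) % 2) * (2*v) = 2 * f v := by
        simp [Nat.mul_div_cancel_left, Nat.mul_mod_right]
      rw [e1, e2]
      exact iff_of_false (ujoin_oe _ _ _ _) (ujoin_oe _ _ _ _)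
    · have h1 : (2*u+1) % 2 = 1 := by omega
      have h2 : (2*v+1) % 2 = 1 := by omega
      have e1 : (1 - (2*u+1) % 2) * (2 * f ((2*u+1) / 2)) + ((2*u+1) % 2) * (2*u+1) = 2*u+1 := by
        rw [h1]; simp
      have e2 : (1 - (2*v+1) % 2) * (2 * f ((2*v+1) / 2)) + ((2*v+1) % 2) * (2*v+1) = 2*v+1 := by
        rw [h2]; simp
      rw [e1, e2, ujoin_oo, ujoin_oo]

open Finset in
lemma reduces_of_join (S T : ℕ → ℕ → Prop) (k : ℕ) (hk : 0 < k) (hTr : ∀ x, T x x)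
    (h : CompReduces (UJoin S (IdN k)) (UJoin T (IdN k))) : CompReduces S T := by
  classical
  obtain ⟨f, hfc, hf⟩ := h
  set A : Finset ℕ :=
    (range k).filter (fun r => ∃ x, f (2*x) % 2 = 1 ∧ (f (2*x) / 2) % k = r) with hA
  set G : Finset ℕ := (range k).filter (fun r => f (2*r+1) % 2 = 0) with hGdef
  set B : Finset ℕ := (range k).filter (fun r => ¬ f (2*r+1) % 2 = 0) with hBdef
  have hBodd : ∀ r ∈ B, f (2*r+1) % 2 = 1 := by
    intro r hr
    have := (mem_filter.mp hr).2
    omega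
  have βinj : Set.InjOn (fun r => (f (2*r+1) / 2) % k) B := by
    intro r hr s hs hrs
    have hrodd := hBodd r hr
    have hsodd := hBodd s hs
    have h1 : UJoin T (IdN k) (f (2*r+1)) (f (2*s+1)) := by
      rw [show f (2*r+1) = 2 * (f (2*r+1)/2) + 1 by omega,
          show f (2*s+1) = 2 * (f (2*s+1)/2) + 1 by omega, ujoin_oo]
      exact hrs
    have h2 := (hf _ _).mpr h1
    rw [ujoin_oo] at h2
    have hrk := mem_range.mp (mem_filter.mp hr).1
    have hsk := mem_range.mp (mem_filter.mp hs).1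
    have h3 : r % k = s % k := h2
    rwa [Nat.mod_eq_of_lt hrk, Nat.mod_eq_of_lt hsk] at h3
  have hdisj : Disjoint A (B.image (fun r => (f (2*r+1) / 2) % k)) := by
    rw [disjoint_right]
    intro r hrB hrA
    obtain ⟨s, hsB, rfl⟩ := mem_image.mp hrB
    obtain ⟨x, hx1, hx2⟩ := (mem_filter.mp hrA).2
    have hsodd := hBodd s hsB
    have h1 : UJoin T (IdN k) (f (2*x)) (f (2*s+1)) := by
      rw [show f (2*x) = 2 * (f (2*x)/2) + 1 by omega,
          show f (2*s+1) = 2 * (f (2*s+1)/2) + 1 by omega, ujoin_oo]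
      exact hx2
    exact ujoin_eo _ _ x s ((hf _ _).mpr h1)
  have hcard : A.card ≤ G.card := by
    have h1 : G.card + B.card = k := by
      have := Finset.card_filter_add_card_filter_not
        (s := range k) (p := fun r => f (2*r+1) % 2 = 0)
      rwa [card_range] at this
    have hsub : A ∪ B.image (fun r => (f (2*r+1) / 2) % k) ⊆ range k := by
      intro r hr
      rcases mem_union.mp hr with h' | h'
      · exact (mem_filter.mp h').1
      · obtain ⟨s, hs, rfl⟩ := mem_image.mp h'
        exact mem_range.mpr (Nat.mod_lt _ hk)
    have h2 : A.card + B.card ≤ k := by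
      calc A.card + B.card
          = A.card + (B.image (fun r => (f (2*r+1) / 2) % k)).card := by
            rw [Finset.card_image_of_injOn βinj]
        _ = (A ∪ B.image (fun r => (f (2*r+1) / 2) % k)).card :=
            (card_union_of_disjoint hdisj).symm
        _ ≤ (range k).card := card_le_card hsub
        _ = k := card_range k
    omega
  have hcard' : Fintype.card A ≤ Fintype.card G := by
    simpa [Fintype.card_coe] using hcard
  obtain ⟨e⟩ := Function.Embedding.nonempty_of_card_le hcard'
  set ι : ℕ → ℕ := fun r => if h : r ∈ A then (e ⟨r, h⟩ : ℕ) else 0 with hι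
  have hιG : ∀ r ∈ A, ι r ∈ G := by
    intro r hr
    simp only [hι, dif_pos hr]
    exact (e ⟨r, hr⟩).2
  have hιinj : Set.InjOn ι A := by
    intro r hr s hs hrs
    have hr' : r ∈ A := hr
    have hs' : s ∈ A := hs
    rw [hι] at hrs
    simp only at hrs
    rw [dif_pos hr', dif_pos hs'] at hrs
    have h1 : e ⟨r, hr'⟩ = e ⟨s, hs'⟩ := Subtype.coe_injective hrs
    exact Subtype.mk_eq_mk.mp (e.injective h1)
  have hGprop : ∀ r ∈ G, r < k ∧ f (2*r+1) % 2 = 0 := by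
    intro r hr
    exact ⟨mem_range.mp (mem_filter.mp hr).1, (mem_filter.mp hr).2⟩
  set c : ℕ → ℕ := fun n => ((List.range k).map (fun r => f (2 * ι r + 1) / 2)).getD n 0 with hc
  have hck : ∀ r, r < k → c r = f (2 * ι r + 1) / 2 := by
    intro r hr
    simp [hc, List.getD_eq_getElem?_getD, List.getElem?_map, List.getElem?_range hr]
  refine ⟨fun x => (1 - f (2*x) % 2) * (f (2*x) / 2) + (f (2*x) % 2) * c ((f (2*x) / 2) % k),
    ?_, ?_⟩
  · have hcC : Computable c := getD_computable _
    have hf2 : Computable (fun x : ℕ => f (2*x)) :=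
      hfc.comp (Primrec.nat_mul.comp (.const 2) .id).to_comp
    have hpart : Computable (fun x : ℕ => c ((f (2*x) / 2) % k)) :=
      hcC.comp ((Primrec.nat_mod.comp (Primrec.nat_div.comp .id (.const 2))
        (.const k)).to_comp.comp hf2)
    have hmain := (Primrec.nat_add.comp
        (Primrec.nat_mul.comp
          (Primrec.nat_sub.comp (.const 1) (Primrec.nat_mod.comp .fst (.const 2)))
          (Primrec.nat_div.comp .fst (.const 2)))
        (Primrec.nat_mul.comp (Primrec.nat_mod.comp .fst (.const 2)) .snd)).to_comp.comp
        (hf2.pair hpart)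
    exact hmain.of_eq (fun x => by simp)
  · intro x y
    beta_reduce
    have eval_even : ∀ w : ℕ,
        (1 - 2*w % 2) * (2*w / 2) + 2*w % 2 * c (2*w / 2 % k) = w := by
      intro w
      simp [Nat.mul_div_cancel_left, Nat.mul_mod_right]
    have eval_odd : ∀ w : ℕ,
        (1 - (2*w+1) % 2) * ((2*w+1) / 2) + (2*w+1) % 2 * c ((2*w+1) / 2 % k) = c (w % k) := by
      intro w
      have h1 : (2*w+1) % 2 = 1 := by omega
      have h2 : (2*w+1) / 2 = w := by omega
      rw [h1, h2]
      simp
    have hx := hf (2*x) (2*y)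
    rw [ujoin_ee] at hx
    rcases Nat.mod_two_eq_zero_or_one (f (2*x)) with hpa | hpa <;>
      rcases Nat.mod_two_eq_zero_or_one (f (2*y)) with hpb | hpb
    · -- both even
      obtain ⟨u, hu⟩ : ∃ u, f (2*x) = 2*u := ⟨f (2*x) / 2, by omega⟩
      obtain ⟨v, hv⟩ : ∃ v, f (2*y) = 2*v := ⟨f (2*y) / 2, by omega⟩
      rw [hu, hv] at hx ⊢
      rw [ujoin_ee] at hx
      rw [eval_even u, eval_even v]
      exact hx
    · -- x even, y odd
      obtain ⟨u, hu⟩ : ∃ u, f (2*x) = 2*u := ⟨f (2*x) / 2, by omega⟩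
      obtain ⟨v, hv⟩ : ∃ v, f (2*y) = 2*v+1 := ⟨f (2*y) / 2, by omega⟩
      have hvdiv : (2*v+1)/2 = v := by omega
      have hsA : v % k ∈ A := by
        rw [hA, mem_filter]
        exact ⟨mem_range.mpr (Nat.mod_lt _ hk), ⟨y, by rw [hv]; exact ⟨by omega, by rw [hvdiv]⟩⟩⟩
      have hG1 := hGprop _ (hιG _ hsA)
      have hcs : c (v % k) = f (2 * ι (v % k) + 1) / 2 := hck _ (Nat.mod_lt _ hk)
      rw [hu, hv] at hx ⊢
      rw [eval_even u, eval_odd v]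
      refine iff_of_false (fun h' => ujoin_eo _ _ u v (hx.mp h')) (fun h' => ?_)
      -- h' : T u (c (v % k))
      have h1 : UJoin T (IdN k) (f (2*x)) (f (2 * ι (v % k) + 1)) := by
        rw [hu, show f (2 * ι (v % k) + 1) = 2 * (f (2 * ι (v % k) + 1)/2) by omega, ujoin_ee]
        rw [← hcs]
        exact h'
      exact ujoin_eo _ _ x (ι (v % k)) ((hf _ _).mpr h1)
    · -- x odd, y even
      obtain ⟨u, hu⟩ : ∃ u, f (2*x) = 2*u+1 := ⟨f (2*x) / 2, by omega⟩
      obtain ⟨v, hv⟩ : ∃ v, f (2*y) = 2*v := ⟨f (2*y) / 2, by omega⟩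
      have hudiv : (2*u+1)/2 = u := by omega
      have hsA : u % k ∈ A := by
        rw [hA, mem_filter]
        exact ⟨mem_range.mpr (Nat.mod_lt _ hk), ⟨x, by rw [hu]; exact ⟨by omega, by rw [hudiv]⟩⟩⟩
      have hG1 := hGprop _ (hιG _ hsA)
      have hcs : c (u % k) = f (2 * ι (u % k) + 1) / 2 := hck _ (Nat.mod_lt _ hk)
      rw [hu, hv] at hx ⊢
      rw [eval_odd u, eval_even v]
      refine iff_of_false (fun h' => ujoin_oe _ _ u v (hx.mp h')) (fun h' => ?_)
      have h1 : UJoin T (IdN k) (f (2 * ι (u % k) + 1)) (f (2*y)) := by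
        rw [hv, show f (2 * ι (u % k) + 1) = 2 * (f (2 * ι (u % k) + 1)/2) by omega, ujoin_ee]
        rw [← hcs]
        exact h'
      exact ujoin_oe _ _ (ι (u % k)) y ((hf _ _).mpr h1)
    · -- both odd
      obtain ⟨u, hu⟩ : ∃ u, f (2*x) = 2*u+1 := ⟨f (2*x) / 2, by omega⟩
      obtain ⟨v, hv⟩ : ∃ v, f (2*y) = 2*v+1 := ⟨f (2*y) / 2, by omega⟩
      have hudiv : (2*u+1)/2 = u := by omega
      have hvdiv : (2*v+1)/2 = v := by omega
      have hsA : u % k ∈ A := by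
        rw [hA, mem_filter]
        exact ⟨mem_range.mpr (Nat.mod_lt _ hk), ⟨x, by rw [hu]; exact ⟨by omega, by rw [hudiv]⟩⟩⟩
      have htA : v % k ∈ A := by
        rw [hA, mem_filter]
        exact ⟨mem_range.mpr (Nat.mod_lt _ hk), ⟨y, by rw [hv]; exact ⟨by omega, by rw [hvdiv]⟩⟩⟩
      have hGs := hGprop _ (hιG _ hsA)
      have hGt := hGprop _ (hιG _ htA)
      have hcs : c (u % k) = f (2 * ι (u % k) + 1) / 2 := hck _ (Nat.mod_lt _ hk)
      have hct : c (v % k) = f (2 * ι (v % k) + 1) / 2 := hck _ (Nat.mod_lt _ hk)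
      rw [hu, hv] at hx ⊢
      rw [eval_odd u, eval_odd v]
      rw [ujoin_oo] at hx
      constructor
      · intro h'
        have hst : u % k = v % k := hx.mp h'
        rw [hst]
        exact hTr _
      · intro h'
        have h1 : UJoin T (IdN k) (f (2 * ι (u % k) + 1)) (f (2 * ι (v % k) + 1)) := by
          rw [show f (2 * ι (u % k) + 1) = 2 * (f (2 * ι (u % k) + 1)/2) by omega,
              show f (2 * ι (v % k) + 1) = 2 * (f (2 * ι (v % k) + 1)/2) by omega, ujoin_ee,
              ← hcs, ← hct]
          exact h'
        have h2 := (hf _ _).mpr h1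
        rw [ujoin_oo] at h2
        have h3 : ι (u % k) % k = ι (v % k) % k := h2
        have h4 : ι (u % k) = ι (v % k) := by
          rwa [Nat.mod_eq_of_lt hGs.1, Nat.mod_eq_of_lt hGt.1] at h3
        have h5 : u % k = v % k := hιinj hsA htA h4
        exact hx.mpr h5

lemma compReduces_refl (S : ℕ → ℕ → Prop) : CompReduces S S :=
  ⟨id, Computable.id, fun _ _ => Iff.rfl⟩

theorem equiv_iff_oplus_idk_equiv (S T : ℕ → ℕ → Prop) (k : ℕ)
    (hS : IsCeer S) (hT : IsCeer T) :
    CompEquiv S T ↔ CompEquiv (OplusId S k) (OplusId T k) := by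
  rcases Nat.eq_zero_or_pos k with rfl | hk
  · simp [OplusId]
  · have hk0 : k ≠ 0 := Nat.pos_iff_ne_zero.mp hk
    simp only [CompEquiv, OplusId, if_neg hk0]
    constructor
    · rintro ⟨h1, h2⟩
      exact ⟨join_mono S T k h1, join_mono T S k h2⟩
    · rintro ⟨h1, h2⟩
      exact ⟨reduces_of_join S T k hk (fun x => hT.1.refl x) h1,
        reduces_of_join T S k hk (fun x => hS.1.refl x) h2⟩
end

section
/- If f is a computable reduction from a ceer R to a ceer S whose range omits exactly k equivalence classes of S, then R ⊕ Id_k ≡ S. -/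
open Nat.Partrec (Code)
open Nat.Partrec.Code

/-- Extract a "step-bounded verifier" for a c.e. binary relation. -/
theorem exists_verifier (S : ℕ → ℕ → Prop)
    (hS : Partrec fun p : ℕ × ℕ => Part.assert (S p.1 p.2) fun _ => Part.some ()) :
    ∃ c : Code, (∀ a b s, (evaln s c (Nat.pair a b)).isSome → S a b) ∧
      (∀ a b, S a b → ∃ s, (evaln s c (Nat.pair a b)).isSome) := by
  have h1 : Partrec fun n : ℕ =>
      (Part.assert (S n.unpair.1 n.unpair.2) fun _ => Part.some ()).map fun _ => (0 : ℕ) :=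
    (hS.comp Computable.unpair).map ((Computable.const 0).to₂)
  obtain ⟨c, hc⟩ := exists_code.1 (Partrec.nat_iff.1 h1)
  have key : ∀ a b, (0 ∈ eval c (Nat.pair a b)) ↔ S a b := by
    intro a b
    rw [hc]
    simp [Part.mem_assert_iff]
  refine ⟨c, ?_, ?_⟩
  · intro a b s hs
    obtain ⟨x, hx⟩ := Option.isSome_iff_exists.1 hs
    have hx' : x ∈ evaln s c (Nat.pair a b) := hx
    have := evaln_sound hx'
    rw [hc] at this
    simp [Part.mem_assert_iff] at this
    exact this.1
  · intro a b h
    obtain ⟨s, hs⟩ := evaln_complete.1 ((key a b).2 h)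
    exact ⟨s, Option.isSome_iff_exists.2 ⟨0, hs⟩⟩

theorem reduction_omitting_k_classes (R S : ℕ → ℕ → Prop) (k : ℕ)
    (hR : IsCeer R) (hS : IsCeer S)
    (f : ℕ → ℕ) (hf : Computable f) (hred : ∀ x y, R x y ↔ S (f x) (f y))
    (g : Fin k → ℕ)
    (hg_ineq : ∀ i j, i ≠ j → ¬ S (g i) (g j))
    (hg_omitted : ∀ i, ∀ x, ¬ S (f x) (g i))
    (hg_all : ∀ y, (∀ x, ¬ S (f x) y) → ∃ i, S y (g i)) :
    CompEquiv (OplusId R k) S := by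
  have eS : Equivalence S := hS.1
  obtain ⟨c, csound, ccomp⟩ := exists_verifier S hS.2
  -- the finite tuple `g` as a computable function
  set gv : ℕ → ℕ := fun m => (List.ofFn g).getD m 0 with hgvdef
  have hgvc : Computable gv :=
    ((Primrec.list_getD (0 : ℕ)).comp (Primrec.const (List.ofFn g)) Primrec.id).to_comp
  have hgve : ∀ i : Fin k, gv i = g i := by
    intro i
    have hlen : (i : ℕ) < (List.ofFn g).length := by simpa using i.isLt
    show (List.ofFn g).getD (i : ℕ) 0 = g i
    rw [List.getD_eq_getElem _ _ hlen, List.getElem_ofFn]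
  constructor
  · -- OplusId R k ≤ S
    rcases eq_or_ne k 0 with hk | hk
    · subst hk
      exact ⟨f, hf, by simpa [OplusId] using hred⟩
    · refine ⟨fun n => if n % 2 = 0 then f (n / 2) else gv ((n / 2) % k), ?_, ?_⟩
      · have hb : Computable fun n : ℕ => decide (n % 2 = 0) :=
          (Primrec.eq.comp (Primrec.nat_mod.comp Primrec.id (Primrec.const 2))
            (Primrec.const 0)).decide.to_comp
        have h1 : Computable fun n : ℕ => f (n / 2) :=
          hf.comp (Primrec.nat_div.comp Primrec.id (Primrec.const 2)).to_comp
        have h2 : Computable fun n : ℕ => gv ((n / 2) % k) :=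
          hgvc.comp (Primrec.nat_mod.comp
            (Primrec.nat_div.comp Primrec.id (Primrec.const 2)) (Primrec.const k)).to_comp
        exact (Computable.cond hb h1 h2).of_eq fun n => by
          by_cases h : n % 2 = 0 <;> simp [h]
      · intro x y
        simp only [OplusId, if_neg hk]
        constructor
        · rintro (⟨u, v, rfl, rfl, huv⟩ | ⟨u, v, rfl, rfl, huv⟩)
          · have h1 : 2 * u % 2 = 0 := by omega
            have h2 : 2 * v % 2 = 0 := by omega
            have h3 : 2 * u / 2 = u := by omega
            have h4 : 2 * v / 2 = v := by omega
            simpa [h1, h2, h3, h4] using (hred u v).1 huv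
          · have h1 : (2 * u + 1) % 2 = 1 := by omega
            have h2 : (2 * v + 1) % 2 = 1 := by omega
            have h3 : (2 * u + 1) / 2 = u := by omega
            have h4 : (2 * v + 1) / 2 = v := by omega
            have huv' : u % k = v % k := huv
            simp [h1, h2, h3, h4, huv']
            exact eS.refl _
        · intro hsxy
          by_cases hx : x % 2 = 0 <;> by_cases hy : y % 2 = 0
          · simp only [if_pos hx, if_pos hy] at hsxy
            exact Or.inl ⟨x / 2, y / 2, by omega, by omega, (hred _ _).2 hsxy⟩
          · exfalso
            simp only [if_pos hx, if_neg hy] at hsxy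
            have hk' : (y / 2) % k < k := Nat.mod_lt _ (Nat.pos_of_ne_zero hk)
            have h5 : gv ((y / 2) % k) = g ⟨(y / 2) % k, hk'⟩ := hgve ⟨(y / 2) % k, hk'⟩
            rw [h5] at hsxy
            exact hg_omitted _ _ hsxy
          · exfalso
            simp only [if_neg hx, if_pos hy] at hsxy
            have hk' : (x / 2) % k < k := Nat.mod_lt _ (Nat.pos_of_ne_zero hk)
            have h5 : gv ((x / 2) % k) = g ⟨(x / 2) % k, hk'⟩ := hgve ⟨(x / 2) % k, hk'⟩
            rw [h5] at hsxy
            exact hg_omitted _ _ (eS.symm hsxy)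
          · simp only [if_neg hx, if_neg hy] at hsxy
            have hkx : (x / 2) % k < k := Nat.mod_lt _ (Nat.pos_of_ne_zero hk)
            have hky : (y / 2) % k < k := Nat.mod_lt _ (Nat.pos_of_ne_zero hk)
            have h5 : gv ((x / 2) % k) = g ⟨(x / 2) % k, hkx⟩ := hgve ⟨(x / 2) % k, hkx⟩
            have h6 : gv ((y / 2) % k) = g ⟨(y / 2) % k, hky⟩ := hgve ⟨(y / 2) % k, hky⟩
            rw [h5, h6] at hsxy
            have hij : (⟨(x / 2) % k, hkx⟩ : Fin k) = ⟨(y / 2) % k, hky⟩ := by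
              by_contra hne
              exact hg_ineq _ _ hne hsxy
            have : (x / 2) % k = (y / 2) % k := congrArg Fin.val hij
            refine Or.inr ⟨x / 2, y / 2, by omega, by omega, ?_⟩
            simpa [IdN] using this
  · -- S ≤ OplusId R k
    set check : ℕ → ℕ → Option ℕ := fun y n =>
      bif decide (n.unpair.1 % 2 = 0) then
        (bif (evaln n.unpair.2 c (Nat.pair (f (n.unpair.1 / 2)) y)).isSome
          then some n.unpair.1 else none)
      else
        bif decide (n.unpair.1 / 2 < k) then
          (bif (evaln n.unpair.2 c (Nat.pair y (gv (n.unpair.1 / 2)))).isSome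
            then some n.unpair.1 else none)
        else none with hcheckdef
    have hcheck : Computable₂ check := by
      have hm : Computable fun p : ℕ × ℕ => p.2.unpair.1 :=
        (Primrec.fst.comp (Primrec.unpair.comp Primrec.snd)).to_comp
      have hs : Computable fun p : ℕ × ℕ => p.2.unpair.2 :=
        (Primrec.snd.comp (Primrec.unpair.comp Primrec.snd)).to_comp
      have hm2 : Computable fun p : ℕ × ℕ => p.2.unpair.1 / 2 :=
        (Primrec.nat_div.comp (Primrec.fst.comp (Primrec.unpair.comp Primrec.snd))
          (Primrec.const 2)).to_comp
      have hsome : Computable fun p : ℕ × ℕ => some p.2.unpair.1 :=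
        Computable.option_some.comp hm
      have hev1 : Computable fun p : ℕ × ℕ =>
          (evaln p.2.unpair.2 c (Nat.pair (f (p.2.unpair.1 / 2)) p.1)).isSome :=
        Primrec.option_isSome.to_comp.comp
          (primrec_evaln.to_comp.comp ((hs.pair (Computable.const c)).pair
            (Primrec₂.natPair.to_comp.comp (hf.comp hm2) Computable.fst)))
      have hev2 : Computable fun p : ℕ × ℕ =>
          (evaln p.2.unpair.2 c (Nat.pair p.1 (gv (p.2.unpair.1 / 2)))).isSome :=
        Primrec.option_isSome.to_comp.comp
          (primrec_evaln.to_comp.comp ((hs.pair (Computable.const c)).pair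
            (Primrec₂.natPair.to_comp.comp Computable.fst (hgvc.comp hm2))))
      have hb1 : Computable fun p : ℕ × ℕ => decide (p.2.unpair.1 % 2 = 0) :=
        (Primrec.eq.comp (Primrec.nat_mod.comp
          (Primrec.fst.comp (Primrec.unpair.comp Primrec.snd)) (Primrec.const 2))
          (Primrec.const 0)).decide.to_comp
      have hb2 : Computable fun p : ℕ × ℕ => decide (p.2.unpair.1 / 2 < k) :=
        (Primrec.nat_lt.comp (Primrec.nat_div.comp
          (Primrec.fst.comp (Primrec.unpair.comp Primrec.snd)) (Primrec.const 2))
          (Primrec.const k)).decide.to_comp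
      exact Computable.cond hb1
        (Computable.cond hev1 hsome (Computable.const none))
        (Computable.cond hb2
          (Computable.cond hev2 hsome (Computable.const none))
          (Computable.const none))
    have spec1 : ∀ y n m, check y n = some m →
        (m % 2 = 0 ∧ S (f (m / 2)) y) ∨ (m % 2 ≠ 0 ∧ m / 2 < k ∧ S y (gv (m / 2))) := by
      intro y n m h
      rw [hcheckdef] at h
      by_cases h1 : n.unpair.1 % 2 = 0
      · cases he : (evaln n.unpair.2 c (Nat.pair (f (n.unpair.1 / 2)) y)).isSome
        · simp [h1, he] at h
        · simp [h1, he] at h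
          subst h
          exact Or.inl ⟨h1, csound _ _ _ he⟩
      · by_cases h2 : n.unpair.1 / 2 < k
        · cases he : (evaln n.unpair.2 c (Nat.pair y (gv (n.unpair.1 / 2)))).isSome
          · simp [h1, h2, he] at h
          · simp [h1, h2, he] at h
            subst h
            exact Or.inr ⟨h1, h2, csound _ _ _ he⟩
        · simp [h1, h2] at h
    have spec2 : ∀ y, ∃ n m, check y n = some m := by
      intro y
      by_cases hxy : ∃ x, S (f x) y
      · obtain ⟨x, hx⟩ := hxy
        obtain ⟨s, hs⟩ := ccomp _ _ hx
        refine ⟨Nat.pair (2 * x) s, 2 * x, ?_⟩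
        rw [hcheckdef]
        have h1 : 2 * x % 2 = 0 := by omega
        have h2 : 2 * x / 2 = x := by omega
        simp [h1, h2, hs]
      · push_neg at hxy
        obtain ⟨i, hi⟩ := hg_all y hxy
        have hgvi : gv (i : ℕ) = g i := hgve i
        obtain ⟨s, hs⟩ := ccomp y (g i) hi
        refine ⟨Nat.pair (2 * (i : ℕ) + 1) s, 2 * (i : ℕ) + 1, ?_⟩
        rw [hcheckdef]
        have h1 : (2 * (i : ℕ) + 1) % 2 = 1 := by omega
        have h2 : (2 * (i : ℕ) + 1) / 2 = (i : ℕ) := by omega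
        rw [← hgvi] at hs
        simp [h1, h2, i.isLt, hs]
    have hdom : ∀ y, (Nat.rfindOpt (check y)).Dom := by
      intro y
      obtain ⟨n, m, hm⟩ := spec2 y
      exact Nat.rfindOpt_dom.2 ⟨n, m, hm⟩
    set G0 : ℕ → ℕ := fun y => (Nat.rfindOpt (check y)).get (hdom y) with hG0def
    have hG0c : Computable G0 :=
      (Partrec.rfindOpt hcheck).of_eq_tot fun y => Part.get_mem (hdom y)
    have hG0 : ∀ y, (G0 y % 2 = 0 ∧ S (f (G0 y / 2)) y) ∨
        (G0 y % 2 ≠ 0 ∧ G0 y / 2 < k ∧ S y (gv (G0 y / 2))) := by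
      intro y
      obtain ⟨n, hn⟩ := Nat.rfindOpt_spec (Part.get_mem (hdom y))
      exact spec1 y n _ hn
    rcases eq_or_ne k 0 with hk | hk
    · subst hk
      have hG0' : ∀ y, S (f (G0 y / 2)) y := by
        intro y
        rcases hG0 y with ⟨_, h⟩ | ⟨_, h, _⟩
        · exact h
        · omega
      refine ⟨fun y => G0 y / 2,
        (Primrec.nat_div.comp Primrec.id (Primrec.const 2)).to_comp.comp hG0c, ?_⟩
      intro y z
      simp only [OplusId, if_pos rfl]
      constructor
      · intro h
        exact (hred _ _).2 (eS.trans (hG0' y) (eS.trans h (eS.symm (hG0' z))))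
      · intro h
        exact eS.trans (eS.symm (hG0' y)) (eS.trans ((hred _ _).1 h) (hG0' z))
    · refine ⟨G0, hG0c, ?_⟩
      intro y z
      simp only [OplusId, if_neg hk]
      rcases hG0 y with ⟨hy1, hy2⟩ | ⟨hy1, hy2, hy3⟩ <;>
        rcases hG0 z with ⟨hz1, hz2⟩ | ⟨hz1, hz2, hz3⟩
      · constructor
        · intro h
          exact Or.inl ⟨G0 y / 2, G0 z / 2, by omega, by omega,
            (hred _ _).2 (eS.trans hy2 (eS.trans h (eS.symm hz2)))⟩
        · rintro (⟨u, v, hu, hv, h⟩ | ⟨u, v, hu, hv, h⟩)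
          · have : u = G0 y / 2 := by omega
            subst this
            have : v = G0 z / 2 := by omega
            subst this
            exact eS.trans (eS.symm hy2) (eS.trans ((hred _ _).1 h) hz2)
          · omega
      · have h5 : gv (G0 z / 2) = g ⟨G0 z / 2, hz2⟩ := hgve ⟨G0 z / 2, hz2⟩
        rw [h5] at hz3
        refine iff_of_false ?_ ?_
        · intro h
          exact hg_omitted ⟨G0 z / 2, hz2⟩ (G0 y / 2) (eS.trans hy2 (eS.trans h hz3))
        · rintro (⟨u, v, hu, hv, h⟩ | ⟨u, v, hu, hv, h⟩) <;> omega
      · have h5 : gv (G0 y / 2) = g ⟨G0 y / 2, hy2⟩ := hgve ⟨G0 y / 2, hy2⟩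
        rw [h5] at hy3
        refine iff_of_false ?_ ?_
        · intro h
          exact hg_omitted ⟨G0 y / 2, hy2⟩ (G0 z / 2)
            (eS.trans hz2 (eS.trans (eS.symm h) hy3))
        · rintro (⟨u, v, hu, hv, h⟩ | ⟨u, v, hu, hv, h⟩) <;> omega
      · have h5 : gv (G0 y / 2) = g ⟨G0 y / 2, hy2⟩ := hgve ⟨G0 y / 2, hy2⟩
        have h6 : gv (G0 z / 2) = g ⟨G0 z / 2, hz2⟩ := hgve ⟨G0 z / 2, hz2⟩
        rw [h5] at hy3
        rw [h6] at hz3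
        constructor
        · intro h
          have hij : (⟨G0 y / 2, hy2⟩ : Fin k) = ⟨G0 z / 2, hz2⟩ := by
            by_contra hne
            exact hg_ineq _ _ hne (eS.trans (eS.symm hy3) (eS.trans h hz3))
          have heq : G0 y / 2 = G0 z / 2 := congrArg Fin.val hij
          refine Or.inr ⟨G0 y / 2, G0 z / 2, by omega, by omega, ?_⟩
          simp [IdN, heq]
        · rintro (⟨u, v, hu, hv, h⟩ | ⟨u, v, hu, hv, h⟩)
          · omega
          · have hu' : u = G0 y / 2 := by omega
            have hv' : v = G0 z / 2 := by omega
            subst hu'; subst hv'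
            have h' : G0 y / 2 = G0 z / 2 := by
              have h2 : G0 y / 2 % k = G0 z / 2 % k := h
              rwa [Nat.mod_eq_of_lt hy2, Nat.mod_eq_of_lt hz2] at h2
            have hij : (⟨G0 y / 2, hy2⟩ : Fin k) = ⟨G0 z / 2, hz2⟩ := Fin.ext h'
            rw [hij] at hy3
            exact eS.trans hy3 (eS.symm hz3)
end

section
/- Every dark ceer is self-full: if R is a ceer with infinitely many classes and no infinite c.e. transversal, then R ⊕ Id_1 ≰ R; equivalently, every computable reduction from R to R hits every R-equivalence class. -/
/-- The range of a computable function is c.e. -/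
theorem aux_range_re (g : ℕ → ℕ) (hg : Computable g) :
    REPred (fun x => ∃ n, g n = x) := by
  have hp : Partrec fun x => Nat.rfind (fun n => Part.some (decide (g n = x))) := by
    apply Partrec.rfind
    apply Computable₂.partrec₂
    exact Computable₂.comp Primrec.eq.decide.to_comp (hg.comp Computable.snd) Computable.fst
  apply hp.dom_re.of_eq
  intro x
  refine (Nat.rfind_dom (p := fun n => Part.some (decide (g n = x)))).trans ?_
  constructor
  · rintro ⟨n, h1, _⟩; exact ⟨n, by simpa using h1⟩
  · rintro ⟨n, h⟩; exact ⟨n, by simp [h], fun _ => trivial⟩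

/-- Iteration of a computable function is computable (in the exponent). -/
theorem aux_iter_computable (f : ℕ → ℕ) (hf : Computable f) (y : ℕ) :
    Computable (fun n => f^[n] y) := by
  have : Computable (fun n : ℕ => Nat.rec (motive := fun _ => ℕ) y (fun _ ih => f ih) n) :=
    Computable.nat_rec (f := fun n : ℕ => n) (g := fun _ => y) (h := fun _ p => f p.2)
      Computable.id (Computable.const y)
      ((hf.comp (Computable.snd.comp Computable.snd)).to₂)
  apply this.of_eq
  intro n
  induction n with
  | zero => rfl
  | succ k ih => rw [Function.iterate_succ_apply']; simp [← ih]

theorem dark_hits_all (R : ℕ → ℕ → Prop) (hR : IsCeer R)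
    (hD : ¬ HasInfiniteTransversal R)
    (f : ℕ → ℕ) (hf : Computable f) (hred : ∀ x y, R x y ↔ R (f x) (f y)) :
    ∀ y, ∃ x, R (f x) y := by
  intro y
  by_contra hy
  push_neg at hy
  set g : ℕ → ℕ := fun n => f^[n] y with hg
  -- cancellation
  have cancel : ∀ n a b, R (f^[n] a) (f^[n] b) ↔ R a b := by
    intro n
    induction n with
    | zero => intro a b; rfl
    | succ k ih =>
      intro a b
      rw [Function.iterate_succ_apply', Function.iterate_succ_apply', ← hred, ih]
  have base : ∀ k, ¬ R y (f^[k+1] y) := by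
    intro k h
    rw [Function.iterate_succ_apply'] at h
    exact hy _ (hR.1.symm h)
  have pairwise : ∀ n m, n < m → ¬ R (g n) (g m) := by
    intro n m hnm h
    have : f^[m] y = f^[n] (f^[m-n] y) := by
      rw [← Function.iterate_add_apply]; congr 1; omega
    rw [hg] at h
    simp only [this] at h
    rw [cancel] at h
    obtain ⟨k, hk⟩ : ∃ k, m - n = k + 1 := ⟨m - n - 1, by omega⟩
    rw [hk] at h
    exact base k h
  have ginj : Function.Injective g := by
    intro n m hnm
    by_contra h
    rcases Nat.lt_or_ge n m with h' | h'
    · exact pairwise n m h' (hnm ▸ hR.1.refl (g m))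
    · exact pairwise m n (by omega) (hnm ▸ hR.1.refl (g m))
  apply hD
  refine ⟨Set.range g, ?_, Set.infinite_range_of_injective ginj, ?_⟩
  · have := aux_range_re g (aux_iter_computable f hf y)
    apply this.of_eq
    intro x
    simp [Set.range, eq_comm]
  · rintro x ⟨n, rfl⟩ z ⟨m, rfl⟩ hne h
    rcases Nat.lt_or_ge n m with h' | h'
    · exact pairwise n m h' h
    · have : n ≠ m := fun e => hne (by rw [e])
      exact pairwise m n (by omega) (hR.1.symm h)

theorem dark_is_selffull (R : ℕ → ℕ → Prop) (hR : IsDark R) :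
    ¬ CompReduces (UJoin R (IdN 1)) R ∧
    ∀ f : ℕ → ℕ, Computable f → (∀ x y, R x y ↔ R (f x) (f y)) →
      ∀ y, ∃ x, R (f x) y := by
  obtain ⟨hceer, _, hD⟩ := hR
  have main := dark_hits_all R hceer hD
  constructor
  · rintro ⟨g, hgc, hgr⟩
    set f : ℕ → ℕ := fun x => g (2 * x) with hf
    have hfc : Computable f :=
      hgc.comp ((Primrec.nat_mul.comp (Primrec.const 2) Primrec.id).to_comp)
    have hfr : ∀ x y, R x y ↔ R (f x) (f y) := by
      intro x y
      rw [hf]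
      simp only
      rw [← hgr]
      constructor
      · intro h; exact Or.inl ⟨x, y, rfl, rfl, h⟩
      · rintro (⟨u, v, hu, hv, h⟩ | ⟨u, v, hu, hv, _⟩)
        · obtain rfl : u = x := by omega
          obtain rfl : v = y := by omega
          exact h
        · omega
    obtain ⟨x, hx⟩ := main f hfc hfr (g 1)
    have hj : UJoin R (IdN 1) (2 * x) 1 := (hgr (2 * x) 1).mpr hx
    rcases hj with ⟨u, v, hu, hv, _⟩ | ⟨u, v, hu, hv, _⟩ <;> omega
  · exact main
end

section
/- A ceer R is self-full if and only if every computable reduction φ : R → R is onto the classes of R (the range of φ intersects every R-class). -/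
theorem selffull_iff_reductions_onto (R : ℕ → ℕ → Prop) (hR : IsCeer R) :
    (¬ CompReduces (UJoin R (IdN 1)) R) ↔
      (∀ f : ℕ → ℕ, Computable f → (∀ x y, R x y ↔ R (f x) (f y)) →
        ∀ y, ∃ x, R (f x) y) := by
  constructor
  · intro hns g hg hred y
    by_contra hno
    push_neg at hno
    set f : ℕ → ℕ := fun n => if n % 2 = 0 then g (n / 2) else y with hfdef
    apply hns
    refine ⟨f, ?_, ?_⟩
    · have hc : Computable fun n : ℕ => bif n % 2 == 0 then g (n / 2) else y := by
        apply Computable.cond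
        · exact Primrec.to_comp (PrimrecPred.decide (Primrec.eq.comp
            (Primrec.nat_mod.comp Primrec.id (Primrec.const 2)) (Primrec.const 0)))
        · exact hg.comp (Primrec.to_comp (Primrec.nat_div.comp Primrec.id (Primrec.const 2)))
        · exact Computable.const y
      convert hc using 2 with n
      simp [hfdef, Bool.cond_decide]
    · intro a b
      have key : ∀ n : ℕ, (n % 2 = 0 ∧ f n = g (n / 2)) ∨ (n % 2 = 1 ∧ f n = y) := by
        intro n
        rcases Nat.even_or_odd n with h | h
        · left; constructor
          · exact Nat.even_iff.mp h
          · simp [hfdef, Nat.even_iff.mp h]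
        · right; constructor
          · exact Nat.odd_iff.mp h
          · simp [hfdef, Nat.odd_iff.mp h]
      rcases key a with ⟨ha, hfa⟩ | ⟨ha, hfa⟩ <;> rcases key b with ⟨hb, hfb⟩ | ⟨hb, hfb⟩
      · rw [hfa, hfb]
        constructor
        · rintro (⟨u, v, rfl, rfl, huv⟩ | ⟨u, v, h1, h2, _⟩)
          · have : (2 * u) / 2 = u := by omega
            have hv : (2 * v) / 2 = v := by omega
            rw [this, hv]; exact (hred u v).mp huv
          · omega
        · intro h
          exact Or.inl ⟨a / 2, b / 2, by omega, by omega, (hred _ _).mpr h⟩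
      · rw [hfa, hfb]
        constructor
        · rintro (⟨u, v, h1, h2, _⟩ | ⟨u, v, h1, h2, _⟩) <;> omega
        · intro h; exact absurd h (hno _)
      · rw [hfa, hfb]
        constructor
        · rintro (⟨u, v, h1, h2, _⟩ | ⟨u, v, h1, h2, _⟩) <;> omega
        · intro h; exact absurd (hR.1.symm h) (hno _)
      · rw [hfa, hfb]
        constructor
        · intro _; exact hR.1.refl y
        · intro _
          exact Or.inr ⟨a / 2, b / 2, by omega, by omega, by unfold IdN; omega⟩
  · rintro h ⟨f, hf, hred⟩
    have hg : Computable fun u : ℕ => f (2 * u) :=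
      hf.comp (Primrec.to_comp (Primrec.nat_mul.comp (Primrec.const 2) Primrec.id))
    have hgr : ∀ u v, R u v ↔ R (f (2 * u)) (f (2 * v)) := by
      intro u v
      rw [← hred]
      constructor
      · intro huv; exact Or.inl ⟨u, v, rfl, rfl, huv⟩
      · rintro (⟨u', v', h1, h2, huv⟩ | ⟨u', v', h1, h2, _⟩)
        · have : u = u' ∧ v = v' := by omega
          rw [this.1, this.2]; exact huv
        · omega
    obtain ⟨x, hx⟩ := h _ hg hgr (f 1)
    have : UJoin R (IdN 1) (2 * x) 1 := (hred _ _).mpr hx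
    rcases this with ⟨u, v, h1, h2, _⟩ | ⟨u, v, h1, h2, _⟩ <;> omega
end

section
/- If R is a self-full ceer, R ≡ E, and φ is a computable reduction of R to E, then the range of φ meets every E-equivalence class. -/
theorem selffull_reduction_onto_classes (R E : ℕ → ℕ → Prop)
    (hR : IsCeer R) (hE : IsCeer E)
    (hsf : ¬ CompReduces (UJoin R (IdN 1)) R)
    (heq : CompEquiv R E)
    (φ : ℕ → ℕ) (hφ : Computable φ) (hred : ∀ x y, R x y ↔ E (φ x) (φ y)) :
    ∀ y, ∃ x, E (φ x) y := by
  intro y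
  by_contra hno
  push_neg at hno
  obtain ⟨g, hg, hgred⟩ := heq.2
  apply hsf
  refine ⟨fun n => if n % 2 = 0 then g (φ (n / 2)) else g y, ?_, ?_⟩
  · have : Computable fun n : ℕ => if n % 2 = 0 then g (φ (n / 2)) else g y := by
      apply Computable.of_eq
        (f := fun n : ℕ => cond (n % 2 = 0 : Bool) (g (φ (n / 2))) (g y))
      · exact Computable.cond
          (Primrec.to_comp (Primrec.eq.comp (Primrec.nat_mod.comp .id (.const 2)) (.const 0)).decide)
          (hg.comp (hφ.comp (Primrec.to_comp (Primrec.nat_div.comp .id (.const 2)))))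
          (Computable.const (g y))
      · intro n; by_cases h : n % 2 = 0 <;> simp [h]
    exact this
  · intro a b
    constructor
    · rintro (⟨u, v, rfl, rfl, huv⟩ | ⟨u, v, rfl, rfl, huv⟩)
      · simp only [Nat.mul_mod_right, if_pos rfl, Nat.mul_div_cancel_left _ (by norm_num : (0:ℕ) < 2)]
        exact (hgred _ _).mp ((hred u v).mp huv)
      · have h1 : (2 * u + 1) % 2 = 1 := by omega
        have h2 : (2 * v + 1) % 2 = 1 := by omega
        simp only [h1, h2, if_neg (by norm_num : (1:ℕ) ≠ 0)]
        exact (hgred y y).mp (hE.1.refl y)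
    · intro h
      rcases Nat.even_or_odd a with ⟨u, hu⟩ | ⟨u, hu⟩ <;>
        rcases Nat.even_or_odd b with ⟨v, hv⟩ | ⟨v, hv⟩
      · subst hu hv
        have ha : (u + u) % 2 = 0 := by omega
        have hb : (v + v) % 2 = 0 := by omega
        have hda : (u + u) / 2 = u := by omega
        have hdb : (v + v) / 2 = v := by omega
        simp only [ha, hb, if_pos rfl, hda, hdb] at h
        exact Or.inl ⟨u, v, by ring, by ring, (hred u v).mpr ((hgred _ _).mpr h)⟩
      · subst hu hv
        have ha : (u + u) % 2 = 0 := by omega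
        have hb : (2 * v + 1) % 2 = 1 := by omega
        have hda : (u + u) / 2 = u := by omega
        simp only [ha, hb, hda] at h
        norm_num at h
        exact absurd ((hgred _ _).mpr h) (hno u)
      · subst hu hv
        have ha : (2 * u + 1) % 2 = 1 := by omega
        have hb : (v + v) % 2 = 0 := by omega
        have hdb : (v + v) / 2 = v := by omega
        simp only [ha, hb, hdb] at h
        norm_num at h
        exact absurd (hE.1.symm ((hgred _ _).mpr h)) (hno v)
      · subst hu hv
        exact Or.inr ⟨u, v, rfl, rfl, by simp [IdN, Nat.mod_one]⟩
end

section
/- For any ceers R and S: if S < R ⊕ Id_1 (i.e., S ≤ R ⊕ Id_1 but R ⊕ Id_1 ≰ S) then S ≤ R; and if R < S then R ⊕ Id_1 ≤ S. -/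
open Nat.Partrec (Code)
open Nat.Partrec.Code

lemma rePred_comp {α β} [Primcodable α] [Primcodable β] {p : α → Prop} {g : β → α}
    (hp : REPred p) (hg : Computable g) : REPred fun x => p (g x) :=
  Partrec.comp hp hg

lemma rePred_and {α} [Primcodable α] {p q : α → Prop} (hp : REPred p) (hq : REPred q) :
    REPred fun a => p a ∧ q a := by
  have : Partrec fun a => (Part.assert (p a) fun _ => Part.some ()).bind
      (fun _ : Unit => Part.assert (q a) fun _ => Part.some ()) :=
    Partrec.bind hp ((hq.comp (Computable.fst)).to₂ : Partrec₂ _)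
  refine this.of_eq fun a => ?_
  ext x
  simp [Part.mem_assert_iff, Part.mem_bind_iff]


lemma ce_choice {Q : ℕ → ℕ → Prop} (hQ : REPred fun p : ℕ × ℕ => Q p.1 p.2)
    (htot : ∀ u, ∃ y, Q u y) : ∃ g : ℕ → ℕ, Computable g ∧ ∀ u, Q u (g u) := by
  -- build a ℕ →. ℕ version
  have h1 : Partrec fun n : ℕ =>
      (Part.assert (Q n.unpair.1 n.unpair.2) fun _ => Part.some ()).map fun _ => 0 :=
    Partrec.map (hQ.comp Computable.unpair) ((Computable.const 0).comp Computable.fst).to₂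
  obtain ⟨c, hc⟩ := exists_code.1 (Partrec.nat_iff.1 h1)
  have key : ∀ u y, Q u y ↔ ∃ k, (evaln k c (Nat.pair u y)).isSome := by
    intro u y
    constructor
    · intro h
      have : (0 : ℕ) ∈ Code.eval c (Nat.pair u y) := by
        rw [hc]; simp [Part.mem_assert_iff, Nat.unpair_pair, h]
      obtain ⟨k, hk⟩ := evaln_complete.1 this
      exact ⟨k, by simp [Option.isSome_iff_exists, Option.mem_def] at hk ⊢; exact ⟨0, hk⟩⟩
    · rintro ⟨k, hk⟩
      rw [Option.isSome_iff_exists] at hk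
      obtain ⟨v, hv⟩ := hk
      have : v ∈ Code.eval c (Nat.pair u y) := evaln_sound hv
      rw [hc] at this
      simp [Part.mem_assert_iff, Nat.unpair_pair] at this
      exact this.1
  set o : ℕ → ℕ → Option ℕ := fun u n =>
    (evaln n.unpair.2 c (Nat.pair u n.unpair.1)).map fun _ => n.unpair.1 with ho
  have hoc : Computable₂ o := by
    apply Computable.option_map
    · exact primrec_evaln.to_comp.comp
        (((Computable.snd.comp (Computable.unpair.comp Computable.snd)).pair
          (Computable.const c)).pair
          (Primrec₂.natPair.to_comp.comp Computable.fst
            (Computable.fst.comp (Computable.unpair.comp Computable.snd))))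
    · exact ((Computable.fst.comp (Computable.unpair.comp Computable.snd)).comp
        Computable.fst).to₂
  have hF : Partrec fun u => Nat.rfindOpt (o u) := Partrec.rfindOpt hoc
  have hdom : ∀ u, (Nat.rfindOpt (o u)).Dom := by
    intro u
    obtain ⟨y, hy⟩ := htot u
    obtain ⟨k, hk⟩ := (key u y).1 hy
    rw [Option.isSome_iff_exists] at hk
    obtain ⟨v, hv⟩ := hk
    exact Nat.rfindOpt_dom.2 ⟨Nat.pair y k, y, by simp [ho, Nat.unpair_pair, hv]⟩
  refine ⟨fun u => (Nat.rfindOpt (o u)).get (hdom u), hF.of_eq_tot fun u => Part.get_mem _, ?_⟩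
  intro u
  have hmem := Part.get_mem (hdom u)
  obtain ⟨n, hn⟩ := Nat.rfindOpt_spec hmem
  simp only [ho, Option.mem_def, Option.map_eq_some_iff] at hn
  obtain ⟨v, hv, hvy⟩ := hn
  have : Q u n.unpair.1 := (key u n.unpair.1).2 ⟨n.unpair.2, by simp [hv]⟩
  convert this using 2
  grind

lemma j_ee {R I : ℕ → ℕ → Prop} {u v : ℕ} : UJoin R I (2*u) (2*v) ↔ R u v := by
  constructor
  · rintro (⟨a,b,ha,hb,h⟩|⟨a,b,ha,hb,h⟩)
    · obtain rfl : a = u := by omega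
      obtain rfl : b = v := by omega
      exact h
    · omega
  · intro h; exact Or.inl ⟨u,v,rfl,rfl,h⟩

lemma j_oo {R : ℕ → ℕ → Prop} {u v : ℕ} : UJoin R (IdN 1) (2*u+1) (2*v+1) :=
  Or.inr ⟨u,v,rfl,rfl, by simp [IdN, Nat.mod_one]⟩

lemma j_eo {R I : ℕ → ℕ → Prop} {u v : ℕ} : ¬ UJoin R I (2*u) (2*v+1) := by
  rintro (⟨a,b,ha,hb,h⟩|⟨a,b,ha,hb,h⟩) <;> omega

lemma j_oe {R I : ℕ → ℕ → Prop} {u v : ℕ} : ¬ UJoin R I (2*u+1) (2*v) := by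
  rintro (⟨a,b,ha,hb,h⟩|⟨a,b,ha,hb,h⟩) <;> omega

lemma equiv_congr {E : ℕ → ℕ → Prop} (h : Equivalence E) {a a' b b'}
    (ha : E a a') (hb : E b b') : E a b ↔ E a' b' :=
  ⟨fun h' => h.trans (h.trans (h.symm ha) h') hb,
   fun h' => h.trans (h.trans ha h') (h.symm hb)⟩

lemma comp_parity_cases {t g h : ℕ → ℕ} (ht : Computable t) (hg : Computable g)
    (hh : Computable h) : Computable fun x => bif decide (t x % 2 = 0) then g x else h x := by
  apply Computable.cond _ hg hh
  exact Primrec.eq.decide.to_comp.comp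
    (Primrec.nat_mod.to_comp.comp ht (Computable.const 2)) (Computable.const 0)

lemma comp_div2 {α} [Primcodable α] {f : α → ℕ} (hf : Computable f) :
    Computable fun x => f x / 2 :=
  Primrec.nat_div.to_comp.comp hf (Computable.const 2)

theorem oplus_id1_facts (R S : ℕ → ℕ → Prop) (hR : IsCeer R) (hS : IsCeer S) :
    (CompReduces S (UJoin R (IdN 1)) → ¬ CompReduces (UJoin R (IdN 1)) S →
      CompReduces S R) ∧
    (CompReduces R S → ¬ CompReduces S R → CompReduces (UJoin R (IdN 1)) S) := by
  obtain ⟨eR, reR⟩ := hR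
  obtain ⟨eS, reS⟩ := hS
  constructor
  · -- Part 1
    rintro ⟨f, hf, hfr⟩ hno
    by_cases hodd : ∃ a, f a % 2 = 1
    · obtain ⟨a, ha⟩ := hodd
      obtain ⟨ua, hua⟩ : ∃ u, f a = 2 * u + 1 := ⟨f a / 2, by omega⟩
      by_cases hc : ∃ c, ∀ y, f y % 2 = 0 → ¬ R c (f y / 2)
      · obtain ⟨c, hc⟩ := hc
        refine ⟨fun x => bif decide (f x % 2 = 0) then f x / 2 else c,
          comp_parity_cases hf (comp_div2 hf) (Computable.const c), ?_⟩
        intro x y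
        by_cases hx : f x % 2 = 0 <;> by_cases hy : f y % 2 = 0 <;>
          simp only [hx, hy, decide_true, decide_false, cond_true, cond_false,
            decide_eq_true_eq]
        · obtain ⟨u, hu⟩ : ∃ u, f x = 2 * u := ⟨f x / 2, by omega⟩
          obtain ⟨v, hv⟩ : ∃ v, f y = 2 * v := ⟨f y / 2, by omega⟩
          have hu2 : f x / 2 = u := by omega
          have hv2 : f y / 2 = v := by omega
          rw [hfr, hu2, hv2, hu, hv, j_ee]
        · -- x even, y odd: both sides false
          obtain ⟨u, hu⟩ : ∃ u, f x = 2 * u := ⟨f x / 2, by omega⟩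
          obtain ⟨v, hv⟩ : ∃ v, f y = 2 * v + 1 := ⟨f y / 2, by omega⟩
          constructor
          · intro h; rw [hfr, hu, hv] at h; exact absurd h j_eo
          · intro h; exact absurd (eR.symm h) (hc x hx)
        · obtain ⟨u, hu⟩ : ∃ u, f x = 2 * u + 1 := ⟨f x / 2, by omega⟩
          obtain ⟨v, hv⟩ : ∃ v, f y = 2 * v := ⟨f y / 2, by omega⟩
          constructor
          · intro h; rw [hfr, hu, hv] at h; exact absurd h j_oe
          · intro h; exact absurd h (hc y hy)
        · -- both odd: both sides true
          obtain ⟨u, hu⟩ : ∃ u, f x = 2 * u + 1 := ⟨f x / 2, by omega⟩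
          obtain ⟨v, hv⟩ : ∃ v, f y = 2 * v + 1 := ⟨f y / 2, by omega⟩
          have hxa : S x a := by rw [hfr, hu, hua]; exact j_oo
          have hya : S y a := by rw [hfr, hv, hua]; exact j_oo
          exact ⟨fun _ => eR.refl c, fun _ => eS.trans hxa (eS.symm hya)⟩
      · push_neg at hc
        exfalso; apply hno
        have hQ : REPred fun p : ℕ × ℕ => f p.2 % 2 = 0 ∧ R p.1 (f p.2 / 2) := by
          apply rePred_and
          · apply ComputablePred.to_re
            apply ComputablePred.computable_iff.2
            refine ⟨fun p : ℕ × ℕ => decide (f p.2 % 2 = 0), ?_, ?_⟩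
            · have : Computable₂ fun a b : ℕ => decide (a = b) := Primrec.eq.decide.to_comp
              have hm : Computable fun p : ℕ × ℕ => f p.2 % 2 :=
                Primrec.nat_mod.to_comp.comp (hf.comp Computable.snd) (Computable.const 2)
              exact this.comp hm (Computable.const 0)
            · funext p; simp
          · have hg : Computable fun p : ℕ × ℕ => (p.1, f p.2 / 2) :=
              Computable.pair Computable.fst (comp_div2 (hf.comp Computable.snd))
            exact rePred_comp reR hg
        obtain ⟨h₀, hh₀c, hh₀⟩ := ce_choice (Q := fun u y => f y % 2 = 0 ∧ R u (f y / 2)) hQ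
          fun u => (hc u).imp fun y hy => ⟨hy.1, hy.2⟩
        refine ⟨fun x => bif decide (x % 2 = 0) then h₀ (x / 2) else a,
          comp_parity_cases Computable.id (hh₀c.comp (comp_div2 Computable.id))
            (Computable.const a), ?_⟩
        intro x y
        by_cases hx : x % 2 = 0 <;> by_cases hy : y % 2 = 0 <;>
          simp only [hx, hy, decide_true, decide_false, cond_true, cond_false]
        · obtain ⟨u, hu⟩ : ∃ u, x = 2 * u := ⟨x / 2, by omega⟩
          obtain ⟨v, hv⟩ : ∃ v, y = 2 * v := ⟨y / 2, by omega⟩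
          subst hu; subst hv
          rw [j_ee, Nat.mul_div_cancel_left _ (by norm_num : 0 < 2),
            Nat.mul_div_cancel_left _ (by norm_num : 0 < 2), hfr]
          obtain ⟨pu, qu⟩ := hh₀ u
          obtain ⟨pv, qv⟩ := hh₀ v
          obtain ⟨u', hu'⟩ : ∃ w, f (h₀ u) = 2 * w := ⟨f (h₀ u) / 2, by omega⟩
          obtain ⟨v', hv'⟩ : ∃ w, f (h₀ v) = 2 * w := ⟨f (h₀ v) / 2, by omega⟩
          rw [hu', hv', j_ee]
          have hu'' : f (h₀ u) / 2 = u' := by omega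
          have hv'' : f (h₀ v) / 2 = v' := by omega
          rw [hu''] at qu; rw [hv''] at qv
          exact equiv_congr eR qu qv
        · obtain ⟨u, hu⟩ : ∃ u, x = 2 * u := ⟨x / 2, by omega⟩
          obtain ⟨v, hv⟩ : ∃ v, y = 2 * v + 1 := ⟨y / 2, by omega⟩
          subst hu; subst hv
          rw [Nat.mul_div_cancel_left _ (by norm_num : 0 < 2)]
          constructor
          · intro h; exact absurd h j_eo
          · intro h
            rw [hfr] at h
            obtain ⟨pu, _⟩ := hh₀ u
            obtain ⟨u', hu'⟩ : ∃ w, f (h₀ u) = 2 * w := ⟨f (h₀ u) / 2, by omega⟩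
            rw [hu', hua] at h
            exact absurd h j_eo
        · obtain ⟨u, hu⟩ : ∃ u, x = 2 * u + 1 := ⟨x / 2, by omega⟩
          obtain ⟨v, hv⟩ : ∃ v, y = 2 * v := ⟨y / 2, by omega⟩
          subst hu; subst hv
          rw [Nat.mul_div_cancel_left _ (by norm_num : 0 < 2)]
          constructor
          · intro h; exact absurd h j_oe
          · intro h
            rw [hfr] at h
            obtain ⟨pv, _⟩ := hh₀ v
            obtain ⟨v', hv'⟩ : ∃ w, f (h₀ v) = 2 * w := ⟨f (h₀ v) / 2, by omega⟩
            rw [hua, hv'] at h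
            exact absurd h j_oe
        · obtain ⟨u, hu⟩ : ∃ u, x = 2 * u + 1 := ⟨x / 2, by omega⟩
          obtain ⟨v, hv⟩ : ∃ v, y = 2 * v + 1 := ⟨y / 2, by omega⟩
          subst hu; subst hv
          exact ⟨fun _ => eS.refl a, fun _ => j_oo⟩
    · -- all values even
      push_neg at hodd
      have heven : ∀ x, f x % 2 = 0 := fun x => by have := hodd x; omega
      refine ⟨fun x => f x / 2, comp_div2 hf, ?_⟩
      intro x y
      show S x y ↔ R (f x / 2) (f y / 2)
      obtain ⟨u, hu⟩ : ∃ u, f x = 2 * u := ⟨f x / 2, by have := heven x; omega⟩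
      obtain ⟨v, hv⟩ : ∃ v, f y = 2 * v := ⟨f y / 2, by have := heven y; omega⟩
      have hu2 : f x / 2 = u := by omega
      have hv2 : f y / 2 = v := by omega
      rw [hfr, hu2, hv2, hu, hv, j_ee]
  · -- Part 2
    rintro ⟨f, hf, hfr⟩ hno
    by_cases hc : ∃ c, ∀ y, ¬ S c (f y)
    · obtain ⟨c, hc⟩ := hc
      refine ⟨fun x => bif decide (x % 2 = 0) then f (x / 2) else c,
        comp_parity_cases Computable.id (hf.comp (comp_div2 Computable.id))
          (Computable.const c), ?_⟩
      intro x y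
      by_cases hx : x % 2 = 0 <;> by_cases hy : y % 2 = 0 <;>
        simp only [hx, hy, decide_true, decide_false, cond_true, cond_false]
      · obtain ⟨u, hu⟩ : ∃ u, x = 2 * u := ⟨x / 2, by omega⟩
        obtain ⟨v, hv⟩ : ∃ v, y = 2 * v := ⟨y / 2, by omega⟩
        subst hu; subst hv
        rw [j_ee, Nat.mul_div_cancel_left _ (by norm_num : 0 < 2),
          Nat.mul_div_cancel_left _ (by norm_num : 0 < 2)]
        exact hfr u v
      · obtain ⟨u, hu⟩ : ∃ u, x = 2 * u := ⟨x / 2, by omega⟩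
        obtain ⟨v, hv⟩ : ∃ v, y = 2 * v + 1 := ⟨y / 2, by omega⟩
        subst hu; subst hv
        rw [Nat.mul_div_cancel_left _ (by norm_num : 0 < 2)]
        exact ⟨fun h => absurd h j_eo, fun h => absurd (eS.symm h) (hc u)⟩
      · obtain ⟨u, hu⟩ : ∃ u, x = 2 * u + 1 := ⟨x / 2, by omega⟩
        obtain ⟨v, hv⟩ : ∃ v, y = 2 * v := ⟨y / 2, by omega⟩
        subst hu; subst hv
        rw [Nat.mul_div_cancel_left _ (by norm_num : 0 < 2)]
        exact ⟨fun h => absurd h j_oe, fun h => absurd h (hc v)⟩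
      · obtain ⟨u, hu⟩ : ∃ u, x = 2 * u + 1 := ⟨x / 2, by omega⟩
        obtain ⟨v, hv⟩ : ∃ v, y = 2 * v + 1 := ⟨y / 2, by omega⟩
        subst hu; subst hv
        exact ⟨fun _ => eS.refl c, fun _ => j_oo⟩
    · push_neg at hc
      exfalso; apply hno
      have hg' : Computable fun p : ℕ × ℕ => (p.1, f p.2) :=
        Computable.pair Computable.fst (hf.comp Computable.snd)
      have hQ : REPred fun p : ℕ × ℕ => S p.1 (f p.2) := rePred_comp reS hg'
      obtain ⟨g, hgc, hg⟩ := ce_choice (Q := fun c y => S c (f y)) hQ hc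
      refine ⟨g, hgc, fun x y => ?_⟩
      rw [equiv_congr eS (hg x) (hg y)]
      exact (hfr (g x) (g y)).symm
end

section
/- A ceer R is dark minimal (dark, and every ceer strictly below R is finite) if and only if R has infinitely many classes and every c.e. set W that intersects infinitely many R-classes intersects every R-class. -/
open Nat.Partrec (Code)
open Nat.Partrec.Code

lemma sigma_of_rePred {p : ℕ → Prop} (hp : REPred p) :
    ∃ q : ℕ → ℕ → Bool, Computable₂ q ∧ ∀ x, (p x ↔ ∃ s, q s x = true) := by
  obtain ⟨c, hc⟩ := Code.exists_code.1 hp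
  refine ⟨fun s x => (evaln s c x).isSome, ?_, ?_⟩
  · have h1 : Primrec₂ fun s x : ℕ => evaln s c x :=
      primrec_evaln.comp ((Primrec.fst.pair (Primrec.const c)).pair Primrec.snd)
    exact (Primrec.option_isSome.comp₂ h1).to_comp
  · intro x
    have hdom : p x ↔ (eval c x).Dom := by
      rw [hc]; simp [Part.dom_iff_mem, Encodable.decode]
    rw [hdom, Part.dom_iff_mem]
    constructor
    · rintro ⟨a, ha⟩
      obtain ⟨k, hk⟩ := evaln_complete.1 ha
      exact ⟨k, by simp [Option.isSome_iff_exists]; exact ⟨a, hk⟩⟩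
    · rintro ⟨s, hs⟩
      obtain ⟨a, ha⟩ := Option.isSome_iff_exists.1 hs
      exact ⟨a, evaln_complete.2 ⟨s, ha⟩⟩

/-- Enumeration of a nonempty c.e. set. -/
lemma enum_of_rePred {p : ℕ → Prop} (hp : REPred p) {a₀ : ℕ} (h₀ : p a₀) :
    ∃ h : ℕ → ℕ, Computable h ∧ (∀ n, p (h n)) ∧ ∀ x, p x → ∃ n, h n = x := by
  obtain ⟨q, hq, hiff⟩ := sigma_of_rePred hp
  refine ⟨fun m => cond (q m.unpair.1 m.unpair.2) m.unpair.2 a₀, ?_, ?_, ?_⟩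
  · have h1 : Computable fun m : ℕ => m.unpair.1 := (Primrec.fst.comp Primrec.unpair).to_comp
    have h2 : Computable fun m : ℕ => m.unpair.2 := (Primrec.snd.comp Primrec.unpair).to_comp
    exact Computable.cond (hq.comp h1 h2) h2 (Computable.const a₀)
  · intro n
    rcases hb : q n.unpair.1 n.unpair.2 with _ | _
    · simpa [hb] using h₀
    · simp only [hb, cond_true]
      exact (hiff _).2 ⟨_, hb⟩
  · intro x hx
    obtain ⟨s, hs⟩ := (hiff x).1 hx
    exact ⟨Nat.pair s x, by simp [hs]⟩

/-- Computable selection from a total c.e. relation. -/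
lemma selection {P : ℕ → ℕ → Prop} (hP : REPred fun q : ℕ × ℕ => P q.1 q.2)
    (htot : ∀ y, ∃ n, P y n) :
    ∃ sel : ℕ → ℕ, Computable sel ∧ ∀ y, P y (sel y) := by
  have hP' : REPred fun m : ℕ => P m.unpair.1 m.unpair.2 := hP.comp Primrec.unpair.to_comp
  obtain ⟨q, hq, hiff⟩ := sigma_of_rePred hP'
  set G : ℕ → Part ℕ := fun y =>
    (Nat.rfind fun m => Part.some (q m.unpair.1 (Nat.pair y m.unpair.2))).map fun m => m.unpair.2
    with hG
  have hGpr : Partrec G := by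
    have h1 : Computable₂ fun y m : ℕ => q m.unpair.1 (Nat.pair y m.unpair.2) := by
      have hu1 : Computable fun p : ℕ × ℕ => p.2.unpair.1 :=
        ((Primrec.fst.comp Primrec.unpair).comp Primrec.snd).to_comp
      have hu2 : Computable fun p : ℕ × ℕ => Nat.pair p.1 p.2.unpair.2 :=
        (Primrec₂.natPair.comp Primrec.fst ((Primrec.snd.comp Primrec.unpair).comp Primrec.snd)).to_comp
      exact hq.comp hu1 hu2
    exact (Partrec.rfind h1.partrec₂).map
      (((Primrec.snd.comp Primrec.unpair).comp Primrec.snd).to_comp.to₂)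
  have hdom : ∀ y, (G y).Dom := by
    intro y
    have : ∃ m : ℕ, q m.unpair.1 (Nat.pair y m.unpair.2) = true := by
      obtain ⟨n, hn⟩ := htot y
      have : P (Nat.pair y n).unpair.1 (Nat.pair y n).unpair.2 := by simpa using hn
      obtain ⟨s, hs⟩ := (hiff _).1 this
      exact ⟨Nat.pair s n, by simpa using hs⟩
    obtain ⟨m, hm⟩ := this
    have hrd : (Nat.rfind fun m => Part.some (q m.unpair.1 (Nat.pair y m.unpair.2))).Dom :=
      Nat.rfind_dom.2 ⟨m, by simp [hm], fun _ => trivial⟩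
    exact hrd
  refine ⟨fun y => (G y).get (hdom y), hGpr.of_eq fun y => (Part.some_get (hdom y)).symm, ?_⟩
  intro y
  have hmem : (G y).get (hdom y) ∈ G y := Part.get_mem _
  obtain ⟨m, hm, hm2⟩ := (Part.mem_map_iff _).1 hmem
  have := Nat.rfind_spec hm
  rw [Part.mem_some_iff] at this
  have : P (Nat.pair y m.unpair.2).unpair.1 (Nat.pair y m.unpair.2).unpair.2 :=
    (hiff _).2 ⟨m.unpair.1, this.symm⟩
  simpa [hm2] using this

/-- The range of a computable function is c.e. -/
lemma rePred_range {g : ℕ → ℕ} (hg : Computable g) : REPred fun x => ∃ n, g n = x := by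
  have hF : Partrec fun x => Nat.rfind fun n => Part.some (decide (g n = x)) := by
    have h1 : Computable₂ fun x n : ℕ => decide (g n = x) :=
      Computable₂.mk <| Primrec.eq.decide.to_comp.comp (hg.comp Computable.snd) Computable.fst
    exact Partrec.rfind h1.partrec₂
  have := hF.dom_re
  refine this.of_eq fun x => ?_
  refine Nat.rfind_dom.trans ?_
  constructor
  · rintro ⟨n, hn, -⟩
    rw [Part.mem_some_iff] at hn
    exact ⟨n, of_decide_eq_true hn.symm⟩
  · rintro ⟨n, hn⟩
    exact ⟨n, by simp [hn], fun _ => trivial⟩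

/-- Iteration of a computable function is computable. -/
lemma computable_iterate {k : ℕ → ℕ} (hk : Computable k) (y : ℕ) :
    Computable fun n => k^[n] y := by
  have h : Computable fun n : ℕ => (Nat.rec y (fun _ ih => k ih) n : ℕ) :=
    Computable.nat_rec Computable.id (Computable.const y)
      (hk.comp (Computable.snd.comp Computable.snd)).to₂
  refine h.of_eq fun n => ?_
  induction n with
  | zero => simp
  | succ m ih => simp [Function.iterate_succ_apply', ih]

lemma not_infinite_exactly {S : ℕ → ℕ → Prop} (hinf : InfiniteClasses S) {n : ℕ}
    (hex : ExactlyNClasses S n) : False := by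
  obtain ⟨f, _, hcov⟩ := hex
  obtain ⟨x, hx⟩ := hinf (Finset.image f Finset.univ)
  obtain ⟨i, hi⟩ := hcov x
  exact hx (f i) (Finset.mem_image_of_mem f (Finset.mem_univ i)) hi

lemma exactly_of_cover {S : ℕ → ℕ → Prop} (hS : Equivalence S) :
    ∀ A : Finset ℕ, (∀ x, ∃ a ∈ A, S x a) → ∃ n, ExactlyNClasses S n := by
  intro A
  induction A using Finset.strongInductionOn with
  | _ A ih =>
    intro hcov
    by_cases hpair : ∃ a ∈ A, ∃ b ∈ A, a ≠ b ∧ S a b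
    · obtain ⟨a, ha, b, hb, hab, hSab⟩ := hpair
      refine ih (A.erase b) (Finset.erase_ssubset hb) ?_
      intro x
      obtain ⟨c, hc, hxc⟩ := hcov x
      by_cases hcb : c = b
      · exact ⟨a, Finset.mem_erase.2 ⟨hab, ha⟩, hS.trans (hcb ▸ hxc) (hS.symm hSab)⟩
      · exact ⟨c, Finset.mem_erase.2 ⟨hcb, hc⟩, hxc⟩
    · push_neg at hpair
      refine ⟨A.card, fun i => (A.orderIsoOfFin rfl i : ℕ), ?_, ?_⟩
      · intro i j hij hS'
        refine hpair _ (A.orderIsoOfFin rfl i).2 _ (A.orderIsoOfFin rfl j).2 ?_ hS'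
        intro he
        exact hij ((A.orderIsoOfFin rfl).injective (Subtype.ext he))
      · intro x
        obtain ⟨c, hc, hxc⟩ := hcov x
        obtain ⟨i, hi⟩ := (A.orderIsoOfFin rfl).surjective ⟨c, hc⟩
        exact ⟨i, by simp only []; rw [hi]; exact hxc⟩
theorem dark_minimal_characterization (R : ℕ → ℕ → Prop) (hR : IsCeer R) :
    (IsDark R ∧ ∀ S : ℕ → ℕ → Prop, IsCeer S → CompReduces S R →
        ¬ CompReduces R S → ∃ n, ExactlyNClasses S n) ↔
    (InfiniteClasses R ∧ ∀ W : Set ℕ, REPred (· ∈ W) →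
        MeetsInfManyClasses R W → ∀ y, ∃ x ∈ W, R x y) := by
  classical
  constructor
  · rintro ⟨⟨-, hinfR, hnotrans⟩, hmin⟩
    refine ⟨hinfR, ?_⟩
    intro W hWre hWmeets y
    obtain ⟨a₀, ha₀, -⟩ := hWmeets ∅
    obtain ⟨h, hh, hhmem, hhcov⟩ := enum_of_rePred hWre ha₀
    have hSceer : IsCeer (fun u v => R (h u) (h v)) := by
      refine ⟨⟨fun x => hR.1.refl _, fun hxy => hR.1.symm hxy,
        fun h1 h2 => hR.1.trans h1 h2⟩, ?_⟩
      exact hR.2.comp ((hh.comp Computable.fst).pair (hh.comp Computable.snd))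
    have hSR : CompReduces (fun u v => R (h u) (h v)) R := ⟨h, hh, fun x y => Iff.rfl⟩
    have hSinf : InfiniteClasses (fun u v => R (h u) (h v)) := by
      intro A
      obtain ⟨w, hw, hwA⟩ := hWmeets (A.image h)
      obtain ⟨x, hx⟩ := hhcov w hw
      exact ⟨x, fun a ha hSxa => hwA (h a) (Finset.mem_image_of_mem h ha) (hx ▸ hSxa)⟩
    have hRS : CompReduces R (fun u v => R (h u) (h v)) := by
      by_contra hn
      obtain ⟨n, hex⟩ := hmin _ hSceer hSR hn
      exact not_infinite_exactly hSinf hex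
    obtain ⟨f, hf, hred⟩ := hRS
    have hkred : ∀ x y, R x y ↔ R (h (f x)) (h (f y)) := hred
    have hkc : Computable fun x => h (f x) := hh.comp hf
    have hkit : ∀ (a u v : ℕ),
        R ((fun x => h (f x))^[a] u) ((fun x => h (f x))^[a] v) ↔ R u v := by
      intro a
      induction a with
      | zero => intro u v; simp
      | succ m ih =>
        intro u v
        rw [Function.iterate_succ_apply', Function.iterate_succ_apply', ← hkred]
        exact ih u v
    have hexab : ∃ a b : ℕ, a < b ∧
        R ((fun x => h (f x))^[a] y) ((fun x => h (f x))^[b] y) := by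
      by_contra hno
      push_neg at hno
      apply hnotrans
      refine ⟨{x | ∃ n, (fun x => h (f x))^[n] y = x},
        rePred_range (computable_iterate hkc y), ?_, ?_⟩
      · have hinj : Function.Injective fun n => (fun x => h (f x))^[n] y := by
          intro a b hab
          by_contra hne
          have hab' : (fun x => h (f x))^[a] y = (fun x => h (f x))^[b] y := hab
          rcases lt_or_gt_of_ne hne with hl | hl
          · exact hno a b hl (by rw [hab']; exact hR.1.refl _)
          · exact hno b a hl (by rw [hab']; exact hR.1.refl _)
        exact Set.infinite_range_of_injective hinj
      · rintro x ⟨n, rfl⟩ z ⟨m, rfl⟩ hne hRxz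
        rcases lt_trichotomy n m with hl | he | hl
        · exact hno n m hl hRxz
        · exact hne (he ▸ rfl)
        · exact hno m n hl (hR.1.symm hRxz)
    obtain ⟨a, b, hab, hRab⟩ := hexab
    have hb : (fun x => h (f x))^[b] y
        = (fun x => h (f x))^[a] ((fun x => h (f x))^[b-a] y) := by
      rw [← Function.iterate_add_apply]; congr 1; omega
    have hyk : R y ((fun x => h (f x))^[b-a] y) := by
      rw [hb] at hRab; exact (hkit a _ _).1 hRab
    refine ⟨(fun x => h (f x))^[b-a] y, ?_, hR.1.symm hyk⟩
    have hrw : (fun x => h (f x))^[b-a] y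
        = h (f ((fun x => h (f x))^[b-a-1] y)) := by
      conv_lhs => rw [show b - a = (b-a-1)+1 by omega, Function.iterate_succ_apply']
    rw [hrw]; exact hhmem _
  · rintro ⟨hinfR, hprop⟩
    constructor
    · refine ⟨hR, hinfR, ?_⟩
      rintro ⟨W, hWre, hWinf, htr⟩
      have hmeets : MeetsInfManyClasses R W := by
        intro A
        have hBfin : {w : ℕ | w ∈ W ∧ ∃ a ∈ A, R w a}.Finite := by
          have hsub : {w : ℕ | w ∈ W ∧ ∃ a ∈ A, R w a} ⊆ ⋃ a ∈ A, {w | w ∈ W ∧ R w a} := by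
            rintro w ⟨hw, a, ha, hra⟩; exact Set.mem_biUnion ha ⟨hw, hra⟩
          refine Set.Finite.subset (Set.Finite.biUnion A.finite_toSet fun a _ => ?_) hsub
          refine Set.Subsingleton.finite ?_
          rintro u ⟨hu, hua⟩ v ⟨hv, hva⟩
          by_contra hne
          exact htr u hu v hv hne (hR.1.trans hua (hR.1.symm hva))
        obtain ⟨w, hwW, hwB⟩ := (hWinf.diff hBfin).nonempty
        exact ⟨w, hwW, fun a ha hra => hwB ⟨hwW, a, ha, hra⟩⟩
      obtain ⟨x₀, hx₀⟩ := hWinf.nonempty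
      obtain ⟨b₀, hb₀W, hb₀⟩ := (hWinf.diff (Set.finite_singleton x₀)).nonempty
      obtain ⟨h, hh, hhmem, hhcov⟩ := enum_of_rePred hWre hx₀
      have hb₀ne : b₀ ≠ x₀ := by simpa using hb₀
      have hgc : Computable fun n => cond (decide (h n = x₀)) b₀ (h n) :=
        Computable.cond (Primrec.eq.decide.to_comp.comp hh (Computable.const x₀))
          (Computable.const b₀) hh
      have hgW : ∀ n, cond (decide (h n = x₀)) b₀ (h n) ∈ W := by
        intro n
        rcases hd : decide (h n = x₀) with _ | _
        · simpa [hd] using hhmem n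
        · simpa [hd] using hb₀W
      have hgne : ∀ n, cond (decide (h n = x₀)) b₀ (h n) ≠ x₀ := by
        intro n
        rcases hd : decide (h n = x₀) with _ | _
        · simpa [hd] using of_decide_eq_false hd
        · simpa [hd] using hb₀ne
      have hgcov : ∀ x, x ∈ W → x ≠ x₀ → ∃ n, cond (decide (h n = x₀)) b₀ (h n) = x := by
        intro x hxW hxne
        obtain ⟨n, hn⟩ := hhcov x hxW
        refine ⟨n, ?_⟩
        have hd : decide (h n = x₀) = false := decide_eq_false (hn ▸ hxne)
        rw [hd]; simpa using hn
      have hmeets' : MeetsInfManyClasses R {x | ∃ n, cond (decide (h n = x₀)) b₀ (h n) = x} := by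
        intro A
        obtain ⟨w, hwW, hwA⟩ := hmeets (insert x₀ A)
        have hwne : w ≠ x₀ := fun he => hwA x₀ (Finset.mem_insert_self _ _) (he ▸ hR.1.refl w)
        obtain ⟨n, hn⟩ := hgcov w hwW hwne
        exact ⟨w, ⟨n, hn⟩, fun a ha => hwA a (Finset.mem_insert_of_mem ha)⟩
      obtain ⟨x, ⟨n, hn⟩, hRx⟩ := hprop _ (rePred_range hgc) hmeets' x₀
      exact htr x (hn ▸ hgW n) x₀ hx₀ (hn ▸ hgne n) hRx
    · intro S hS hSR hnRS
      obtain ⟨g, hg, hgred⟩ := hSR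
      by_cases hcov : ∃ A : Finset ℕ, ∀ x, ∃ a ∈ A, S x a
      · obtain ⟨A, hA⟩ := hcov
        exact exactly_of_cover hS.1 A hA
      · exfalso
        push_neg at hcov
        have hSinf : InfiniteClasses S := hcov
        have hmeets : MeetsInfManyClasses R {x | ∃ n, g n = x} := by
          intro A
          by_contra hno
          push_neg at hno
          obtain ⟨x₁, hx₁⟩ := hSinf
            (A.attach.image fun a => if hz : ∃ z, R (g z) a.1 then hz.choose else 0)
          obtain ⟨a, haA, hga⟩ := hno (g x₁) ⟨x₁, rfl⟩
          have hz : ∃ z, R (g z) a := ⟨x₁, hga⟩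
          have hbB : hz.choose ∈
              A.attach.image fun a => if hz : ∃ z, R (g z) a.1 then hz.choose else 0 :=
            Finset.mem_image.2 ⟨⟨a, haA⟩, Finset.mem_attach _ _, dif_pos hz⟩
          exact hx₁ _ hbB
            ((hgred x₁ hz.choose).2 (hR.1.trans hga (hR.1.symm hz.choose_spec)))
        have htot : ∀ y, ∃ n, R (g n) y := by
          intro y
          obtain ⟨x, ⟨n, hn⟩, hRxy⟩ := hprop _ (rePred_range hg) hmeets y
          exact ⟨n, hn ▸ hRxy⟩
        have hPre : REPred fun q : ℕ × ℕ => R (g q.2) q.1 :=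
          hR.2.comp ((hg.comp Computable.snd).pair Computable.fst)
        obtain ⟨sel, hselc, hsel⟩ := selection hPre htot
        apply hnRS
        refine ⟨sel, hselc, fun x y => ?_⟩
        constructor
        · intro hxy
          exact (hgred _ _).2 (hR.1.trans (hsel x) (hR.1.trans hxy (hR.1.symm (hsel y))))
        · intro hxy
          exact hR.1.trans (hR.1.symm (hsel x)) (hR.1.trans ((hgred _ _).1 hxy) (hsel y))
end

section
/- If R is a dark minimal ceer, then any two distinct R-equivalence classes [a]_R ≠ [b]_R are computably inseparable: there is no computable set X with [a]_R ⊆ X and [b]_R ∩ X = ∅. -/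
theorem dark_minimal_classes_inseparable (R : ℕ → ℕ → Prop) (hR : IsCeer R)
    (hinf : InfiniteClasses R)
    (hmin : ∀ W : Set ℕ, REPred (· ∈ W) → MeetsInfManyClasses R W →
      ∀ y, ∃ x ∈ W, R x y)
    (a b : ℕ) (hab : ¬ R a b) :
    ¬ ∃ X : Set ℕ, ComputablePred (· ∈ X) ∧ {x | R x a} ⊆ X ∧
      ∀ x, R x b → x ∉ X := by
  rintro ⟨X, hXc, hA, hB⟩
  -- One of X, Xᶜ meets infinitely many classes.
  have key : MeetsInfManyClasses R X ∨ MeetsInfManyClasses R Xᶜ := by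
    by_contra h
    push_neg at h
    obtain ⟨h1, h2⟩ := h
    simp only [MeetsInfManyClasses, not_forall, not_exists] at h1 h2
    obtain ⟨A, hA1⟩ := h1
    obtain ⟨B, hB1⟩ := h2
    simp only [not_and, not_forall, not_not] at hA1 hB1
    obtain ⟨x, hx⟩ := hinf (A ∪ B)
    by_cases hxX : x ∈ X
    · obtain ⟨c, hc, hRc⟩ := hA1 x hxX
      exact hx c (Finset.mem_union_left _ hc) hRc
    · obtain ⟨c, hc, hRc⟩ := hB1 x hxX
      exact hx c (Finset.mem_union_right _ hc) hRc
  cases key with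
  | inl h =>
    obtain ⟨x, hxX, hxb⟩ := hmin X hXc.to_re h b
    exact hB x hxb hxX
  | inr h =>
    obtain ⟨x, hxX, hxa⟩ := hmin Xᶜ hXc.not.to_re h a
    exact hxX (hA hxa)
end

section
/- If R is a dark minimal ceer and R ≤ S ⊕ Id_k for some k ≥ 1 and ceer S, then R ≤ S. -/
theorem dark_minimal_reduces_through_idk (R S : ℕ → ℕ → Prop)
    (hR : IsCeer R) (hS : IsCeer S)
    (hinf : InfiniteClasses R)
    (hmin : ∀ W : Set ℕ, REPred (· ∈ W) → MeetsInfManyClasses R W →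
      ∀ y, ∃ x ∈ W, R x y)
    (k : ℕ) (hk : 1 ≤ k)
    (hred : CompReduces R (UJoin S (IdN k))) :
    CompReduces R S := by
  classical
  obtain ⟨f, hfc, hf⟩ := hred
  obtain ⟨hRequiv, -⟩ := hR
  -- odd-image elements with the same residue class are R-equivalent
  have hodd : ∀ x y, f x % 2 = 1 → f y % 2 = 1 → (f x / 2) % k = (f y / 2) % k → R x y := by
    intro x y hx hy hxy
    rw [hf]
    right
    exact ⟨f x / 2, f y / 2, by omega, by omega, hxy⟩
  have heven : ∀ x y, f x % 2 = 0 → f y % 2 = 0 → (R x y ↔ S (f x / 2) (f y / 2)) := by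
    intro x y hx hy
    rw [hf]
    constructor
    · rintro (⟨u, v, hu, hv, hs⟩ | ⟨u, v, hu, hv, _⟩)
      · have : u = f x / 2 := by omega
        have : v = f y / 2 := by omega
        subst_vars; exact hs
      · omega
    · intro hs
      exact Or.inl ⟨f x / 2, f y / 2, by omega, by omega, hs⟩
  -- representatives of odd classes
  set r : ℕ → ℕ := fun i =>
    if h : ∃ x, f x % 2 = 1 ∧ (f x / 2) % k = i then h.choose else 0 with hr
  have hrspec : ∀ i, (∃ x, f x % 2 = 1 ∧ (f x / 2) % k = i) →
      f (r i) % 2 = 1 ∧ (f (r i) / 2) % k = i := by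
    intro i h
    simp only [hr, dif_pos h]
    exact h.choose_spec
  -- the even-image set
  set E : Set ℕ := {x | f x % 2 = 0} with hE
  have hEre : REPred (· ∈ E) := by
    have : ComputablePred (· ∈ E) := by
      refine ComputablePred.computable_iff.mpr ⟨fun x => decide (f x % 2 = 0), ?_, ?_⟩
      · have hp : Primrec (fun n : ℕ => decide (n % 2 = 0)) :=
          PrimrecPred.decide (Primrec.eq.comp (Primrec.nat_mod.comp .id (.const 2)) (.const 0))
        exact Computable.comp hp.to_comp hfc
      · funext x; simp [hE]
    exact this.to_re
  have hEinf : MeetsInfManyClasses R E := by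
    intro A
    obtain ⟨x, hx⟩ := hinf (A ∪ (Finset.range k).image r)
    refine ⟨x, ?_, fun a ha => hx a (Finset.mem_union_left _ ha)⟩
    by_contra hxe
    have hx1 : f x % 2 = 1 := by
      simp only [hE, Set.mem_setOf_eq] at hxe; omega
    set i := (f x / 2) % k with hi
    have hex : ∃ z, f z % 2 = 1 ∧ (f z / 2) % k = i := ⟨x, hx1, rfl⟩
    obtain ⟨h1, h2⟩ := hrspec i hex
    have : R x (r i) := hodd x (r i) hx1 h1 (by omega)
    exact hx (r i) (Finset.mem_union_right _
      (Finset.mem_image.mpr ⟨i, Finset.mem_range.mpr (Nat.mod_lt _ hk), rfl⟩)) this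
  have hmeet := hmin E hEre hEinf
  -- pick even companions for each odd class
  set e : ℕ → ℕ := fun i => (hmeet (r i)).choose with he
  have hespec : ∀ i, e i ∈ E ∧ R (e i) (r i) := fun i => (hmeet (r i)).choose_spec
  -- the list of values
  set L : List ℕ := (List.range k).map (fun i => f (e i) / 2) with hL
  refine ⟨fun x => if f x % 2 = 0 then f x / 2 else L.getD ((f x / 2) % k) 0, ?_, ?_⟩
  · -- computability
    have hg : Primrec (fun n : ℕ => if n % 2 = 0 then n / 2 else L.getD ((n / 2) % k) 0) := by
      refine Primrec.ite ?_ ?_ ?_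
      · exact Primrec.eq.comp (Primrec.nat_mod.comp .id (.const 2)) (.const 0)
      · exact Primrec.nat_div.comp .id (.const 2)
      · exact (Primrec.list_getD 0).comp (.const L)
          (Primrec.nat_mod.comp (Primrec.nat_div.comp .id (.const 2)) (.const k))
    exact (hg.to_comp).comp hfc
  · -- correctness
    have key : ∀ x, f x % 2 = 1 →
        (f (e ((f x / 2) % k)) % 2 = 0 ∧ R (e ((f x / 2) % k)) x ∧
         L.getD ((f x / 2) % k) 0 = f (e ((f x / 2) % k)) / 2) := by
      intro x hx1
      set i := (f x / 2) % k with hi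
      have hex : ∃ z, f z % 2 = 1 ∧ (f z / 2) % k = i := ⟨x, hx1, rfl⟩
      obtain ⟨h1, h2⟩ := hrspec i hex
      obtain ⟨he1, he2⟩ := hespec i
      have hxr : R x (r i) := hodd x (r i) hx1 h1 (by omega)
      refine ⟨he1, hRequiv.trans he2 (hRequiv.symm hxr), ?_⟩
      have hik : i < k := Nat.mod_lt _ hk
      simp [hL, List.getD, hik]
    intro x y
    rcases Nat.mod_two_eq_zero_or_one (f x) with hx | hx <;>
      rcases Nat.mod_two_eq_zero_or_one (f y) with hy | hy
    · simp only [if_pos hx, if_pos hy]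
      exact heven x y hx hy
    · obtain ⟨he1, he2, he3⟩ := key y hy
      simp only [if_pos hx, if_neg (by omega : ¬ f y % 2 = 0), he3]
      rw [← heven x _ hx he1]
      exact ⟨fun h => hRequiv.trans h (hRequiv.symm he2), fun h => hRequiv.trans h he2⟩
    · obtain ⟨he1, he2, he3⟩ := key x hx
      simp only [if_neg (by omega : ¬ f x % 2 = 0), if_pos hy, he3]
      rw [← heven _ y he1 hy]
      exact ⟨fun h => hRequiv.trans he2 h, fun h => hRequiv.trans (hRequiv.symm he2) h⟩
    · obtain ⟨hx1, hx2, hx3⟩ := key x hx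
      obtain ⟨hy1, hy2, hy3⟩ := key y hy
      simp only [if_neg (by omega : ¬ f x % 2 = 0), if_neg (by omega : ¬ f y % 2 = 0), hx3, hy3]
      rw [← heven _ _ hx1 hy1]
      constructor
      · intro h; exact hRequiv.trans hx2 (hRequiv.trans h (hRequiv.symm hy2))
      · intro h; exact hRequiv.trans (hRequiv.symm hx2) (hRequiv.trans h hy2)
end
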